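/- Define h_k : [0,1]^n → ℝ by h_k(x) = (n+1)(n+2)·(x_{(k+1)} − x_{(k)})·(x_{(k)} − x_{(k−1)}), with the conventions x_{(0)} = 0 and x_{(n+1)} = 1. Then h_k is nonnegative and ∫_{[0,1]^n} h_k(x) dx = 1, i.e., h_k is a probability density function on the unit cube. -/

import Mathlib

open MeasureTheory Finset

/-- The `k`-th order statistic of `x : Fin n → ℝ`, with conventions
`oStat x 0 = 0` and `oStat x k = 1` for `k > n`. For `1 ≤ k ≤ n` it is the
`k`-th smallest coordinate of `x`. -/
noncomputable def oStat {n : ℕ} (x : Fin n → ℝ) (k : ℕ) : ℝ :=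
  if k = 0 then 0
  else if k ≤ n then ((Finset.univ.val.map x).sort (· ≤ ·)).getD (k - 1) 0
  else 1

/-- The `k`-th order statistic of the subfamily `(x i)_{i ∈ S}`. -/
noncomputable def oStatS {n : ℕ} (S : Finset (Fin n)) (x : Fin n → ℝ) (k : ℕ) : ℝ :=
  ((S.val.map x).sort (· ≤ ·)).getD (k - 1) 0

noncomputable def cnt {n : ℕ} (x : Fin n → ℝ) (s : ℝ) : ℕ :=
  (univ.filter (fun i => x i ≤ s)).card

def box {n : ℕ} (A : Finset (Fin n)) (i : Fin n) (t s : ℝ) : Set (Fin n → ℝ) :=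
  Set.univ.pi (fun j => if j ∈ A then Set.Icc 0 t else if j = i then Set.Ioc t s else Set.Ioc s 1)

noncomputable def eF (n j : ℕ) : (Fin n → ℝ) × ℝ → ENNReal :=
  fun p => if cnt p.1 p.2 = j then 1 else 0

lemma sorted_get_le_iff {l : List ℝ} (hl : l.Pairwise (· ≤ ·)) {j : ℕ} (hj : j < l.length) (s : ℝ) :
    l.get ⟨j, hj⟩ ≤ s ↔ j < l.countP (fun a => decide (a ≤ s)) := by
  induction l generalizing j with
  | nil => simp at hj
  | cons a tl ih =>
    rw [List.pairwise_cons] at hl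
    rcases j with _ | j
    · simp only [List.get, List.countP_cons]
      constructor
      · intro h; simp [h]
      · intro h
        by_cases ha : a ≤ s
        · exact ha
        · rw [decide_eq_false ha] at h
          simp only [Bool.false_eq_true, if_false, add_zero] at h
          obtain ⟨b, hb, hbs⟩ := List.countP_pos_iff.mp h
          exact (hl.1 b hb).trans (of_decide_eq_true hbs)
    · simp only [List.get, List.countP_cons]
      simp only [List.length_cons, Nat.succ_lt_succ_iff] at hj
      rw [ih hl.2 hj]
      by_cases ha : a ≤ s
      · simp [ha]
      · have h0 : tl.countP (fun a => decide (a ≤ s)) = 0 := by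
          rw [List.countP_eq_zero]
          intro b hb
          simp only [decide_eq_true_eq]
          exact fun hbs => ha ((hl.1 b hb).trans hbs)
        have hget : ¬ tl.get ⟨j, hj⟩ ≤ s :=
          fun h => absurd ((hl.1 _ (tl.get_mem _)).trans h) ha
        rw [decide_eq_false ha, h0]
        simp [hget]

lemma length_sortedList {n : ℕ} (x : Fin n → ℝ) :
    ((Finset.univ.val.map x).sort (· ≤ ·)).length = n := by
  rw [Multiset.length_sort, Multiset.card_map]
  simp

lemma countP_sortedList {n : ℕ} (x : Fin n → ℝ) (s : ℝ) :
    ((Finset.univ.val.map x).sort (· ≤ ·)).countP (fun a => decide (a ≤ s)) = cnt x s := by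
  have h1 : Multiset.countP (· ≤ s) ((Finset.univ.val.map x)) = cnt x s := by
    rw [Multiset.countP_map]
    rfl
  rw [← h1]
  rw [← Multiset.sort_eq (α := ℝ) (Finset.univ.val.map x) (· ≤ ·), Multiset.coe_countP]
  rw [Multiset.sort_eq]

lemma cnt_le {n : ℕ} (x : Fin n → ℝ) (s : ℝ) : cnt x s ≤ n := by
  have := Finset.card_filter_le (univ : Finset (Fin n)) (fun i => x i ≤ s)
  simpa [cnt] using this

lemma oStat_le_iff {n : ℕ} (x : Fin n → ℝ) {j : ℕ} (hj1 : 1 ≤ j) (hjn : j ≤ n) (s : ℝ) :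
    oStat x j ≤ s ↔ j ≤ cnt x s := by
  have hjl : j - 1 < ((Finset.univ.val.map x).sort (· ≤ ·)).length := by
    rw [length_sortedList]; omega
  rw [oStat, if_neg (by omega), if_pos hjn, List.getD_eq_getElem _ _ hjl, ← List.get_eq_getElem (i := ⟨j - 1, hjl⟩),
    sorted_get_le_iff (Multiset.pairwise_sort _ _) hjl s, countP_sortedList]
  omega

lemma oStat_zero {n : ℕ} (x : Fin n → ℝ) : oStat x 0 = 0 := rfl
lemma oStat_of_gt {n : ℕ} (x : Fin n → ℝ) {j : ℕ} (h : n < j) : oStat x j = 1 := by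
  rw [oStat, if_neg (by omega), if_neg (by omega)]

lemma cnt_mono {n : ℕ} (x : Fin n → ℝ) {s t : ℝ} (h : s ≤ t) : cnt x s ≤ cnt x t := by
  apply Finset.card_le_card
  intro i hi
  simp only [Finset.mem_filter] at *
  exact ⟨hi.1, hi.2.trans h⟩

section T4
variable {n : ℕ} {x : Fin n → ℝ}

lemma mem_cube_iff : x ∈ Set.Icc (0 : Fin n → ℝ) 1 ↔ ∀ i, 0 ≤ x i ∧ x i ≤ 1 := by
  simp [Set.mem_Icc, Pi.le_def, forall_and]

lemma cnt_of_neg (hx : x ∈ Set.Icc (0 : Fin n → ℝ) 1) {s : ℝ} (hs : s < 0) : cnt x s = 0 := by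
  rw [cnt, Finset.card_eq_zero, Finset.filter_eq_empty_iff]
  intro i _
  exact fun h => absurd (((mem_cube_iff.mp hx) i).1.trans h) (not_le.mpr hs)

lemma cnt_one (hx : x ∈ Set.Icc (0 : Fin n → ℝ) 1) : cnt x 1 = n := by
  rw [cnt]
  have : (univ.filter (fun i => x i ≤ 1)) = univ := by
    rw [Finset.filter_eq_self]
    exact fun i _ => ((mem_cube_iff.mp hx) i).2
  rw [this]; simp

lemma oStat_nonneg (hx : x ∈ Set.Icc (0 : Fin n → ℝ) 1) (j : ℕ) : 0 ≤ oStat x j := by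
  rcases Nat.eq_zero_or_pos j with h | h
  · simp [h, oStat_zero]
  rcases le_or_gt j n with h2 | h2
  · by_contra hneg
    push_neg at hneg
    have := (oStat_le_iff x h h2 (oStat x j)).mp le_rfl
    rw [cnt_of_neg hx hneg] at this
    omega
  · rw [oStat_of_gt x h2]; norm_num

lemma oStat_le_one (hx : x ∈ Set.Icc (0 : Fin n → ℝ) 1) (j : ℕ) : oStat x j ≤ 1 := by
  rcases Nat.eq_zero_or_pos j with h | h
  · simp [h, oStat_zero]
  rcases le_or_gt j n with h2 | h2
  · exact (oStat_le_iff x h h2 1).mpr (by rw [cnt_one hx]; omega)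
  · rw [oStat_of_gt x h2]

lemma oStat_mono (hx : x ∈ Set.Icc (0 : Fin n → ℝ) 1) (j : ℕ) :
    oStat x j ≤ oStat x (j + 1) := by
  rcases Nat.eq_zero_or_pos j with h | h
  · simp only [h, oStat_zero]; exact oStat_nonneg hx 1
  rcases le_or_gt (j+1) n with h2 | h2
  · exact (oStat_le_iff x h (by omega) _).mpr
      (by have := (oStat_le_iff x (by omega) h2 (oStat x (j+1))).mp le_rfl; omega)
  · rw [oStat_of_gt x h2]; exact oStat_le_one hx j

lemma measurable_cnt_level (x : Fin n → ℝ) (j : ℕ) :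
    MeasurableSet {s : ℝ | j ≤ cnt x s} := by
  rcases Nat.eq_zero_or_pos j with h | h
  · simp [h]
  rcases le_or_gt j n with h2 | h2
  · have : {s : ℝ | j ≤ cnt x s} = Set.Ici (oStat x j) := by
      ext s; simp [Set.mem_Ici, ← oStat_le_iff x h h2 s]
    rw [this]; exact measurableSet_Ici
  · have : {s : ℝ | j ≤ cnt x s} = ∅ := by
      ext s; simp only [Set.mem_setOf_eq, Set.mem_empty_iff_false, iff_false, not_le]
      exact lt_of_le_of_lt (cnt_le x s) h2
    rw [this]; exact MeasurableSet.empty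

lemma measurable_cnt_eq (x : Fin n → ℝ) (j : ℕ) :
    MeasurableSet {s : ℝ | cnt x s = j} := by
  have : {s : ℝ | cnt x s = j} = {s : ℝ | j ≤ cnt x s} \ {s : ℝ | j + 1 ≤ cnt x s} := by
    ext s; simp only [Set.mem_setOf_eq, Set.mem_diff]; omega
  rw [this]
  exact (measurable_cnt_level x j).diff (measurable_cnt_level x (j+1))

lemma volume_cnt_eq (hx : x ∈ Set.Icc (0 : Fin n → ℝ) 1) {j : ℕ} (hj : j ≤ n) :
    volume ({s : ℝ | cnt x s = j} ∩ Set.Ioc 0 1) =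
      ENNReal.ofReal (oStat x (j + 1) - oStat x j) := by
  have hsub1 : Set.Ioo (oStat x j) (oStat x (j+1)) ⊆ {s : ℝ | cnt x s = j} ∩ Set.Ioc 0 1 := by
    rintro s ⟨hs1, hs2⟩
    have hs0 : 0 < s := lt_of_le_of_lt (oStat_nonneg hx j) hs1
    have hs1' : s ≤ 1 := le_of_lt (lt_of_lt_of_le hs2 (oStat_le_one hx (j+1)))
    refine ⟨?_, hs0, hs1'⟩
    have hge : j ≤ cnt x s := by
      rcases Nat.eq_zero_or_pos j with h | h
      · omega
      · exact (oStat_le_iff x h hj s).mp (le_of_lt hs1)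
    have hlt : cnt x s < j + 1 := by
      rcases le_or_gt (j+1) n with h2 | h2
      · by_contra hc
        push_neg at hc
        exact absurd ((oStat_le_iff x (by omega) h2 s).mpr hc) (not_le.mpr hs2)
      · have := cnt_le x s; omega
    simp only [Set.mem_setOf_eq]; omega
  have hsub2 : {s : ℝ | cnt x s = j} ∩ Set.Ioc 0 1 ⊆ Set.Icc (oStat x j) (oStat x (j+1)) := by
    rintro s ⟨hcnt, hs0, hs1⟩
    simp only [Set.mem_setOf_eq] at hcnt
    constructor
    · rcases Nat.eq_zero_or_pos j with h | h
      · simp [h, oStat_zero]; exact le_of_lt hs0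
      · exact (oStat_le_iff x h hj s).mpr (by omega)
    · rcases le_or_gt (j+1) n with h2 | h2
      · by_contra hc
        push_neg at hc
        have := (oStat_le_iff x (by omega) h2 s).mp (le_of_lt hc)
        omega
      · rw [oStat_of_gt x h2]; exact hs1
  have h1 : volume (Set.Ioo (oStat x j) (oStat x (j+1))) ≤
      volume ({s : ℝ | cnt x s = j} ∩ Set.Ioc 0 1) := measure_mono hsub1
  have h2 : volume ({s : ℝ | cnt x s = j} ∩ Set.Ioc 0 1) ≤
      volume (Set.Icc (oStat x j) (oStat x (j+1))) := measure_mono hsub2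
  rw [Real.volume_Ioo] at h1
  rw [Real.volume_Icc] at h2
  exact le_antisymm h2 h1

end T4
lemma measurableSet_card_filter_eq {α : Type*} [MeasurableSpace α] {n : ℕ} (f : Fin n → α → ℝ)
    (g : α → ℝ) (hf : ∀ i, Measurable (f i)) (hg : Measurable g) (j : ℕ) :
    MeasurableSet {a | (univ.filter (fun i => f i a ≤ g a)).card = j} := by
  have hset : {a | (univ.filter (fun i => f i a ≤ g a)).card = j} =
      ⋃ A ∈ (univ.powersetCard j : Finset (Finset (Fin n))),
        ⋂ i, {a | i ∈ A ↔ f i a ≤ g a} := by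
    ext a
    simp only [Set.mem_setOf_eq, Set.mem_iUnion, Set.mem_iInter, Finset.mem_coe,
      Finset.mem_powersetCard]
    constructor
    · intro h
      exact ⟨univ.filter (fun i => f i a ≤ g a), ⟨Finset.filter_subset _ _, h⟩,
        fun i => by simp⟩
    · rintro ⟨A, ⟨-, hcard⟩, hiff⟩
      have : univ.filter (fun i => f i a ≤ g a) = A := by
        ext i; simp [hiff i]
      rw [this, hcard]
  rw [hset]
  refine MeasurableSet.biUnion (Finset.countable_toSet _) (fun A _ => ?_)
  refine MeasurableSet.iInter (fun i => ?_)
  by_cases hi : i ∈ A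
  · simp only [hi, true_iff]
    exact measurableSet_le (hf i) hg
  · have : {a | i ∈ A ↔ f i a ≤ g a} = {a | f i a ≤ g a}ᶜ := by
      ext a; simp [hi]
    rw [this]
    exact (measurableSet_le (hf i) hg).compl

lemma measurableSet_cnt_pair {n : ℕ} (j : ℕ) :
    MeasurableSet {p : (Fin n → ℝ) × ℝ | cnt p.1 p.2 = j} := by
  unfold cnt
  exact measurableSet_card_filter_eq (fun i (p : (Fin n → ℝ) × ℝ) => p.1 i) Prod.snd
    (fun i => measurable_fst.eval) measurable_snd j

lemma measurableSet_cnt_fst {n : ℕ} (s : ℝ) (j : ℕ) :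
    MeasurableSet {x : Fin n → ℝ | cnt x s = j} := by
  unfold cnt
  exact measurableSet_card_filter_eq (fun i (x : Fin n → ℝ) => x i) (fun _ => s)
    (fun i => measurable_pi_apply i) measurable_const j

section Boxes

variable {n k : ℕ} {s t : ℝ}


lemma mem_box_imp (ht : 0 < t) (hts : t < s) (hs : s ≤ 1) {A : Finset (Fin n)} {i : Fin n}
    (hiA : i ∉ A) {x : Fin n → ℝ} (hx : x ∈ box A i t s) :
    x ∈ Set.Icc (0 : Fin n → ℝ) 1 ∧ univ.filter (fun j => x j ≤ t) = A ∧
      univ.filter (fun j => x j ≤ s) = insert i A := by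
  have hx' : ∀ j, x j ∈ (if j ∈ A then Set.Icc 0 t else if j = i then Set.Ioc t s
      else Set.Ioc s 1) := fun j => hx j (Set.mem_univ j)
  have key : ∀ j, (j ∈ A → 0 ≤ x j ∧ x j ≤ t) ∧ (j = i → t < x j ∧ x j ≤ s) ∧
      (j ∉ A → j ≠ i → s < x j ∧ x j ≤ 1) := by
    intro j
    have := hx' j
    by_cases h1 : j ∈ A
    · simp only [h1, if_true] at this
      exact ⟨fun _ => this, fun he => absurd (he ▸ h1) (he ▸ hiA), fun h => absurd h1 h⟩
    · by_cases h2 : j = i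
      · subst h2
        simp only [h1, if_false, if_pos rfl] at this
        exact ⟨fun h => absurd h h1, fun _ => this, fun _ h => absurd rfl h⟩
      · simp only [h1, if_false, if_neg h2] at this
        exact ⟨fun h => absurd h h1, fun h => absurd h h2, fun _ _ => this⟩
  refine ⟨mem_cube_iff.mpr fun j => ?_, ?_, ?_⟩
  · obtain ⟨c1, c2, c3⟩ := key j
    by_cases h1 : j ∈ A
    · obtain ⟨a, b⟩ := c1 h1; exact ⟨a, b.trans (hts.le.trans hs)⟩
    · by_cases h2 : j = i
      · obtain ⟨a, b⟩ := c2 h2; exact ⟨(ht.trans a).le, b.trans hs⟩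
      · obtain ⟨a, b⟩ := c3 h1 h2; exact ⟨((ht.trans hts).trans a).le, b⟩
  · ext j
    simp only [Finset.mem_filter, Finset.mem_univ, true_and]
    obtain ⟨c1, c2, c3⟩ := key j
    constructor
    · intro h
      by_contra h1
      by_cases h2 : j = i
      · exact absurd h (not_le.mpr (c2 h2).1)
      · exact absurd h (not_le.mpr ((hts.trans (c3 h1 h2).1)))
    · exact fun h => (c1 h).2
  · ext j
    simp only [Finset.mem_filter, Finset.mem_univ, true_and, Finset.mem_insert]
    obtain ⟨c1, c2, c3⟩ := key j
    constructor
    · intro h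
      by_cases h2 : j = i
      · exact Or.inl h2
      · by_cases h1 : j ∈ A
        · exact Or.inr h1
        · exact absurd h (not_le.mpr (c3 h1 h2).1)
    · rintro (h | h)
      · exact (c2 h).2
      · exact (c1 h).2.trans hts.le

lemma cube_inter_eq_biUnion (hk : 1 ≤ k) (hkn : k ≤ n) (ht : 0 < t) (hts : t < s) (hs : s ≤ 1) :
    Set.Icc (0 : Fin n → ℝ) 1 ∩ {x | cnt x s = k ∧ cnt x t = k - 1} =
      ⋃ p ∈ ((univ.powersetCard (k-1) : Finset (Finset (Fin n))) ×ˢ univ).filter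
        (fun p => p.2 ∉ p.1), box p.1 p.2 t s := by
  ext x
  simp only [Set.mem_inter_iff, Set.mem_setOf_eq, Set.mem_iUnion, Finset.mem_coe,
    Finset.mem_filter, Finset.mem_product, Finset.mem_powersetCard, Finset.mem_univ, and_true,
    exists_prop]
  constructor
  · rintro ⟨hcube, hcs, hct⟩
    simp only [cnt] at hcs hct
    set Ct := univ.filter (fun i => x i ≤ t) with hCt
    set Cs := univ.filter (fun i => x i ≤ s) with hCs
    have hsub : Ct ⊆ Cs := by
      intro j hj
      simp only [hCt, hCs, Finset.mem_filter] at *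
      exact ⟨hj.1, hj.2.trans hts.le⟩
    have hcard : (Cs \ Ct).card = 1 := by
      rw [Finset.card_sdiff_of_subset hsub]
      omega
    obtain ⟨i, hi⟩ := Finset.card_eq_one.mp hcard
    have hiCt : i ∉ Ct := by
      have : i ∈ Cs \ Ct := hi ▸ Finset.mem_singleton_self i
      exact (Finset.mem_sdiff.mp this).2
    have hiCs : i ∈ Cs := by
      have : i ∈ Cs \ Ct := hi ▸ Finset.mem_singleton_self i
      exact (Finset.mem_sdiff.mp this).1
    have hCsi : Cs = insert i Ct := by
      rw [← Finset.sdiff_union_of_subset hsub, hi]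
      ext j; simp [or_comm]
    refine ⟨⟨Ct, i⟩, ⟨⟨Finset.subset_univ _, ?_⟩, hiCt⟩, ?_⟩
    · exact hct
    · intro j _
      simp only
      have hj0 : 0 ≤ x j := (mem_cube_iff.mp hcube j).1
      have hj1 : x j ≤ 1 := (mem_cube_iff.mp hcube j).2
      by_cases h1 : j ∈ Ct
      · rw [if_pos h1]
        exact ⟨hj0, (Finset.mem_filter.mp h1).2⟩
      · rw [if_neg h1]
        by_cases h2 : j = i
        · rw [if_pos h2]
          subst h2
          exact ⟨not_le.mp (fun h => h1 (Finset.mem_filter.mpr ⟨Finset.mem_univ j, h⟩)),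
            (Finset.mem_filter.mp hiCs).2⟩
        · rw [if_neg h2]
          have : j ∉ Cs := by
            rw [hCsi]
            simp [h2, h1]
          exact ⟨not_le.mp (fun h => this (Finset.mem_filter.mpr ⟨Finset.mem_univ j, h⟩)), hj1⟩
  · rintro ⟨⟨A, i⟩, ⟨⟨-, hcard⟩, hiA⟩, hbox⟩
    obtain ⟨h1, h2, h3⟩ := mem_box_imp ht hts hs hiA hbox
    refine ⟨h1, ?_, ?_⟩
    · show (univ.filter (fun j => x j ≤ s)).card = k
      rw [h3, Finset.card_insert_of_notMem hiA, hcard]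
      omega
    · show (univ.filter (fun j => x j ≤ t)).card = k - 1
      rw [h2, hcard]

lemma volume_box {A : Finset (Fin n)} {i : Fin n} (hiA : i ∉ A) (hA : A.card = k - 1)
    (hk : 1 ≤ k) (hkn : k ≤ n) :
    volume (box A i t s) =
      ENNReal.ofReal t ^ (k-1) * ENNReal.ofReal (s-t) * ENNReal.ofReal (1-s) ^ (n-k) := by
  unfold _root_.box
  rw [volume_pi_pi]
  have hprod : ∀ j : Fin n, volume (if j ∈ A then Set.Icc (0:ℝ) t else if j = i then Set.Ioc t s
      else Set.Ioc s 1) = (if j ∈ A then ENNReal.ofReal t else if j = i then ENNReal.ofReal (s-t)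
      else ENNReal.ofReal (1-s)) := by
    intro j
    by_cases h1 : j ∈ A
    · simp [h1, Real.volume_Icc]
    · by_cases h2 : j = i
      · subst h2; simp [hiA, Real.volume_Ioc]
      · simp [h1, h2, Real.volume_Ioc]
  simp_rw [hprod]
  have huniv : (univ : Finset (Fin n)) = insert i A ∪ (insert i A)ᶜ :=
    (Finset.union_compl (insert i A)).symm
  rw [huniv, Finset.prod_union disjoint_compl_right, Finset.prod_insert hiA,
    if_neg hiA, if_pos rfl]
  have h1 : ∀ j ∈ A, (if j ∈ A then ENNReal.ofReal t else if j = i then ENNReal.ofReal (s-t)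
      else ENNReal.ofReal (1-s)) = ENNReal.ofReal t := fun j hj => if_pos hj
  have h2 : ∀ j ∈ (insert i A)ᶜ, (if j ∈ A then ENNReal.ofReal t
      else if j = i then ENNReal.ofReal (s-t) else ENNReal.ofReal (1-s))
      = ENNReal.ofReal (1-s) := by
    intro j hj
    rw [Finset.mem_compl, Finset.mem_insert, not_or] at hj
    rw [if_neg hj.2, if_neg hj.1]
  rw [Finset.prod_congr rfl h1, Finset.prod_congr rfl h2, Finset.prod_const,
    Finset.prod_const, hA, Finset.card_compl, Finset.card_insert_of_notMem hiA, hA]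
  have : Fintype.card (Fin n) - (k - 1 + 1) = n - k := by
    simp only [Fintype.card_fin]; omega
  rw [this]
  ring



section S2
variable {n k : ℕ} {s t : ℝ}
lemma measurableSet_box (A : Finset (Fin n)) (i : Fin n) (t s : ℝ) :
    MeasurableSet (box A i t s) := by
  apply MeasurableSet.univ_pi
  intro j
  split_ifs
  · exact measurableSet_Icc
  · exact measurableSet_Ioc
  · exact measurableSet_Ioc

lemma volume_cube_inter (hk : 1 ≤ k) (hkn : k ≤ n) (ht : 0 < t) (hts : t < s) (hs : s ≤ 1) :
    volume (Set.Icc (0 : Fin n → ℝ) 1 ∩ {x | cnt x s = k ∧ cnt x t = k - 1}) =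
      (n.choose (k-1) * (n - (k-1)) : ℕ) *
        (ENNReal.ofReal t ^ (k-1) * ENNReal.ofReal (s-t) * ENNReal.ofReal (1-s) ^ (n-k)) := by
  rw [cube_inter_eq_biUnion hk hkn ht hts hs]
  set P := ((univ.powersetCard (k-1) : Finset (Finset (Fin n))) ×ˢ univ).filter
    (fun p => p.2 ∉ p.1) with hP
  have hmem : ∀ p ∈ P, p.1.card = k - 1 ∧ p.2 ∉ p.1 := by
    intro p hp
    simp only [hP, Finset.mem_filter, Finset.mem_product, Finset.mem_powersetCard] at hp
    exact ⟨hp.1.1.2, hp.2⟩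
  have hdisj : (P : Set (Finset (Fin n) × Fin n)).PairwiseDisjoint
      (fun p => box p.1 p.2 t s) := by
    intro p hp q hq hne
    rw [Finset.mem_coe] at hp hq
    apply Set.disjoint_left.mpr
    intro x hxp hxq
    obtain ⟨-, hp2, hp3⟩ := mem_box_imp ht hts hs (hmem p hp).2 hxp
    obtain ⟨-, hq2, hq3⟩ := mem_box_imp ht hts hs (hmem q hq).2 hxq
    have h1 : p.1 = q.1 := hp2.symm.trans hq2
    have h2 : p.2 = q.2 := by
      have : p.2 ∈ insert q.2 q.1 := by
        rw [← hq3, hp3]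
        exact Finset.mem_insert_self _ _
      rcases Finset.mem_insert.mp this with h | h
      · exact h
      · exact absurd (h1 ▸ h) (hmem p hp).2
    exact hne (Prod.ext h1 h2)
  rw [measure_biUnion_finset hdisj (fun p _ => measurableSet_box p.1 p.2 t s)]
  have hval : ∀ p ∈ P, volume (box p.1 p.2 t s) =
      ENNReal.ofReal t ^ (k-1) * ENNReal.ofReal (s-t) * ENNReal.ofReal (1-s) ^ (n-k) :=
    fun p hp => volume_box (hmem p hp).2 (hmem p hp).1 hk hkn
  rw [Finset.sum_congr rfl hval, Finset.sum_const, nsmul_eq_mul]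
  congr 1
  have hcard : P.card = n.choose (k-1) * (n - (k-1)) := by
    have h1 : P.card = ∑ A ∈ (univ.powersetCard (k-1) : Finset (Finset (Fin n))),
        (univ.filter (fun i => i ∉ A)).card := by
      rw [hP, Finset.card_filter, Finset.sum_product]
      exact Finset.sum_congr rfl fun A _ => (Finset.card_filter _ _).symm
    have h2 : ∀ A ∈ (univ.powersetCard (k-1) : Finset (Finset (Fin n))),
        (univ.filter (fun i => i ∉ A)).card = n - (k-1) := by
      intro A hA
      rw [Finset.mem_powersetCard] at hA
      have : univ.filter (fun i => i ∉ A) = Aᶜ := by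
        ext i; simp
      rw [this, Finset.card_compl, hA.2, Fintype.card_fin]
    rw [h1, Finset.sum_congr rfl h2, Finset.sum_const, Finset.card_powersetCard,
      Finset.card_univ, Fintype.card_fin, smul_eq_mul]
  rw [hcard]


end S2
lemma beta_nat (j : ℕ) : ∀ m : ℕ, ∫ x in (0:ℝ)..1, x^m * (1-x)^j
    = (m.factorial * j.factorial : ℝ) / ((m+j+1).factorial) := by
  induction j with
  | zero =>
    intro m
    simp only [pow_zero, mul_one, integral_pow, Nat.factorial, Nat.add_zero, one_pow, Nat.mul_one]
    rw [zero_pow (by omega : m + 1 ≠ 0)]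
    have hf : (m.factorial : ℝ) ≠ 0 := Nat.cast_ne_zero.mpr (Nat.factorial_ne_zero _)
    push_cast
    field_simp
    norm_num
  | succ j ih =>
    intro m
    have h : ∀ x ∈ Set.uIcc (0:ℝ) 1, x^m * (1-x)^(j+1) = x^m*(1-x)^j - x^(m+1)*(1-x)^j := by
      intro x _; ring
    rw [intervalIntegral.integral_congr h,
      intervalIntegral.integral_sub
        (((by continuity : Continuous fun x : ℝ => x^m*(1-x)^j)).intervalIntegrable 0 1)
        (((by continuity : Continuous fun x : ℝ => x^(m+1)*(1-x)^j)).intervalIntegrable 0 1),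
      ih m, ih (m+1)]
    have e1 : m + 1 + j + 1 = m + j + 1 + 1 := by omega
    have e2 : m + (j+1) + 1 = m + j + 1 + 1 := by omega
    rw [e1, e2, Nat.factorial_succ (m+j+1), Nat.factorial_succ j, Nat.factorial_succ m]
    have hf1 : ((m+j+1).factorial : ℝ) ≠ 0 := Nat.cast_ne_zero.mpr (Nat.factorial_ne_zero _)
    have hne : ((m:ℝ) + j + 1 + 1) ≠ 0 := by positivity
    push_cast
    field_simp
    ring

lemma inner_int (m : ℕ) (s : ℝ) :
    ∫ t in (0:ℝ)..s, t^m * (s - t) = s^(m+2)/(((m:ℝ)+1)*((m:ℝ)+2)) := by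
  have h : ∀ t ∈ Set.uIcc (0:ℝ) s, t^m * (s - t) = s * t^m - t^(m+1) := by
    intro t _; ring
  rw [intervalIntegral.integral_congr h,
    intervalIntegral.integral_sub
      (((by continuity : Continuous fun t : ℝ => s * t^m)).intervalIntegrable 0 s)
      (((by continuity : Continuous fun t : ℝ => t^(m+1))).intervalIntegrable 0 s),
    intervalIntegral.integral_const_mul, integral_pow, integral_pow]
  have h1 : ((m:ℝ)+1) ≠ 0 := by positivity
  have h2 : ((m:ℝ)+1+1) ≠ 0 := by positivity
  push_cast
  field_simp
  ring

section Glue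

variable {n k : ℕ}

lemma measurable_eF (n j : ℕ) : Measurable (eF n j) :=
  Measurable.ite (measurableSet_cnt_pair j) measurable_const measurable_const

lemma eF_ne_top {n j : ℕ} (p : (Fin n → ℝ) × ℝ) : eF n j p ≠ ⊤ := by
  unfold eF; split_ifs <;> simp

lemma eF_le_one {n j : ℕ} (p : (Fin n → ℝ) × ℝ) : eF n j p ≤ 1 := by
  unfold eF; split_ifs <;> simp

lemma measurable_oStat (n j : ℕ) : Measurable (fun x : Fin n → ℝ => oStat x j) := by
  rcases eq_or_ne j 0 with rfl | h0
  · exact measurable_const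
  rcases le_or_gt j n with hj | hj
  · apply measurable_of_Iic
    intro s
    have hset : (fun x : Fin n → ℝ => oStat x j) ⁻¹' Set.Iic s =
        ⋃ m ∈ Finset.Icc j n, {x : Fin n → ℝ | cnt x s = m} := by
      ext x
      simp only [Set.mem_preimage, Set.mem_Iic, Set.mem_iUnion, Finset.mem_Icc,
        Set.mem_setOf_eq, exists_prop]
      rw [oStat_le_iff x (by omega) hj s]
      constructor
      · intro h; exact ⟨cnt x s, ⟨h, cnt_le x s⟩, rfl⟩
      · rintro ⟨m, ⟨h1, -⟩, rfl⟩; exact h1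
    rw [hset]
    exact MeasurableSet.biUnion (Finset.countable_toSet _)
      (fun m _ => measurableSet_cnt_fst s m)
  · have : (fun x : Fin n → ℝ => oStat x j) = fun _ => 1 :=
      funext fun x => oStat_of_gt x hj
    rw [this]
    exact measurable_const

lemma lint_eF {x : Fin n → ℝ} (hx : x ∈ Set.Icc (0 : Fin n → ℝ) 1) {j : ℕ} (hj : j ≤ n) :
    ∫⁻ s in Set.Ioc (0:ℝ) 1, eF n j (x, s) =
      ENNReal.ofReal (oStat x (j+1) - oStat x j) := by
  have h1 : (fun s => eF n j (x, s)) =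
      Set.indicator {s : ℝ | cnt x s = j} (fun _ => (1:ENNReal)) := by
    ext s
    simp [eF, Set.indicator_apply]
  rw [h1, lintegral_indicator (measurable_cnt_eq x j), setLIntegral_one,
    Measure.restrict_apply (measurable_cnt_eq x j), volume_cnt_eq hx hj]

lemma swap_lemma (a b : ℕ) :
    ∫⁻ x in Set.Icc (0:Fin n → ℝ) 1, (∫⁻ s in Set.Ioc (0:ℝ) 1, eF n a (x,s)) *
      (∫⁻ t in Set.Ioc (0:ℝ) 1, eF n b (x,t))
    = ∫⁻ s in Set.Ioc (0:ℝ) 1, ∫⁻ t in Set.Ioc (0:ℝ) 1,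
        ∫⁻ x in Set.Icc (0:Fin n → ℝ) 1, eF n a (x,s) * eF n b (x,t) := by
  have hb_ne_top : ∀ x : Fin n → ℝ, (∫⁻ t in Set.Ioc (0:ℝ) 1, eF n b (x,t)) ≠ ⊤ := by
    intro x
    have h1 : (∫⁻ t in Set.Ioc (0:ℝ) 1, eF n b (x,t)) ≤ volume (Set.Ioc (0:ℝ) 1) := by
      rw [← setLIntegral_one]
      exact lintegral_mono fun t => eF_le_one _
    refine ne_top_of_le_ne_top ?_ h1
    simp [Real.volume_Ioc]
  have step1 : ∀ x : Fin n → ℝ, (∫⁻ s in Set.Ioc (0:ℝ) 1, eF n a (x,s)) *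
      (∫⁻ t in Set.Ioc (0:ℝ) 1, eF n b (x,t)) =
      ∫⁻ s in Set.Ioc (0:ℝ) 1, ∫⁻ t in Set.Ioc (0:ℝ) 1, eF n a (x,s) * eF n b (x,t) := by
    intro x
    rw [← lintegral_mul_const' _ _ (hb_ne_top x)]
    exact lintegral_congr fun s => (lintegral_const_mul' _ _ (eF_ne_top (x,s))).symm
  rw [lintegral_congr step1]
  have hm1 : Measurable (Function.uncurry fun (x : Fin n → ℝ) (s : ℝ) =>
      ∫⁻ t in Set.Ioc (0:ℝ) 1, eF n a (x,s) * eF n b (x,t)) := by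
    apply Measurable.lintegral_prod_right (f := fun (p : (Fin n → ℝ) × ℝ) (t : ℝ) =>
      eF n a p * eF n b (p.1, t))
    exact ((measurable_eF n a).comp measurable_fst).mul
      ((measurable_eF n b).comp ((measurable_fst.comp measurable_fst).prodMk measurable_snd))
  rw [lintegral_lintegral_swap hm1.aemeasurable]
  refine lintegral_congr fun s => ?_
  have hm2 : Measurable (Function.uncurry fun (x : Fin n → ℝ) (t : ℝ) =>
      eF n a (x,s) * eF n b (x,t)) := by
    have : Function.uncurry (fun (x : Fin n → ℝ) (t : ℝ) => eF n a (x,s) * eF n b (x,t)) =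
        fun p : (Fin n → ℝ) × ℝ => eF n a (p.1, s) * eF n b p := rfl
    rw [this]
    exact ((measurable_eF n a).comp (measurable_fst.prodMk measurable_const)).mul
      (measurable_eF n b)
  rw [lintegral_lintegral_swap hm2.aemeasurable]

lemma W_eq (hk : 1 ≤ k) (hkn : k ≤ n) {s t : ℝ} (hs : s ∈ Set.Ioc (0:ℝ) 1)
    (htI : t ∈ Set.Ioc (0:ℝ) 1) :
    ∫⁻ x in Set.Icc (0:Fin n→ℝ) 1, eF n k (x,s) * eF n (k-1) (x,t)
    = if t < s then (n.choose (k-1) * (n - (k-1)) : ℕ) *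
        (ENNReal.ofReal t ^ (k-1) * ENNReal.ofReal (s-t) * ENNReal.ofReal (1-s) ^ (n-k))
      else 0 := by
  have hD : MeasurableSet {x : Fin n → ℝ | cnt x s = k ∧ cnt x t = k-1} := by
    have : {x : Fin n → ℝ | cnt x s = k ∧ cnt x t = k-1} =
        {x : Fin n → ℝ | cnt x s = k} ∩ {x : Fin n → ℝ | cnt x t = k-1} := rfl
    rw [this]
    exact (measurableSet_cnt_fst s k).inter (measurableSet_cnt_fst t (k-1))
  have hind : ∀ x : Fin n → ℝ, eF n k (x,s) * eF n (k-1) (x,t) =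
      Set.indicator {x : Fin n → ℝ | cnt x s = k ∧ cnt x t = k-1} (fun _ => (1:ENNReal)) x := by
    intro x
    by_cases h1 : cnt x s = k <;> by_cases h2 : cnt x t = k-1 <;>
      simp [eF, Set.indicator_apply, h1, h2]
  rw [lintegral_congr hind, lintegral_indicator hD, setLIntegral_one,
    Measure.restrict_apply hD]
  by_cases hts : t < s
  · rw [if_pos hts, Set.inter_comm, volume_cube_inter hk hkn htI.1 hts hs.2]
  · rw [if_neg hts]
    have : {x : Fin n → ℝ | cnt x s = k ∧ cnt x t = k-1} = ∅ := by
      ext x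
      simp only [Set.mem_setOf_eq, Set.mem_empty_iff_false, iff_false, not_and]
      intro h1 h2
      have := cnt_mono x (not_lt.mp hts)
      omega
    rw [this, Set.empty_inter, measure_empty]

end Glue

section Calc2

variable {n k : ℕ}

lemma t_lintegral (hk : 1 ≤ k) (hkn : k ≤ n) {s : ℝ} (hs : s ∈ Set.Ioc (0:ℝ) 1) :
    ∫⁻ t in Set.Ioc (0:ℝ) 1, (if t < s then
        ENNReal.ofReal t ^ (k-1) * ENNReal.ofReal (s-t) * ENNReal.ofReal (1-s) ^ (n-k) else 0)
    = ENNReal.ofReal ((1-s)^(n-k) * (s^(k+1)/((k:ℝ)*((k:ℝ)+1)))) := by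
  have h1 : (fun t : ℝ => if t < s then
      ENNReal.ofReal t ^ (k-1) * ENNReal.ofReal (s-t) * ENNReal.ofReal (1-s) ^ (n-k) else 0) =
      Set.indicator (Set.Iio s) (fun t =>
        ENNReal.ofReal t ^ (k-1) * ENNReal.ofReal (s-t) * ENNReal.ofReal (1-s) ^ (n-k)) := by
    ext t
    simp [Set.indicator_apply, Set.mem_Iio]
  rw [h1, lintegral_indicator measurableSet_Iio, Measure.restrict_restrict measurableSet_Iio]
  have h2 : Set.Iio s ∩ Set.Ioc (0:ℝ) 1 = Set.Ioo 0 s := by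
    ext u
    simp only [Set.mem_inter_iff, Set.mem_Iio, Set.mem_Ioc, Set.mem_Ioo]
    constructor
    · rintro ⟨a, b, c⟩; exact ⟨b, a⟩
    · rintro ⟨a, b⟩; exact ⟨b, a, (b.trans_le hs.2).le⟩
  rw [h2]
  have h3 : ∀ t ∈ Set.Ioo (0:ℝ) s,
      ENNReal.ofReal t ^ (k-1) * ENNReal.ofReal (s-t) * ENNReal.ofReal (1-s) ^ (n-k) =
      ENNReal.ofReal (t^(k-1) * (s-t) * (1-s)^(n-k)) := by
    intro t ht
    have ha : (0:ℝ) ≤ t := ht.1.le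
    have hb : (0:ℝ) ≤ s - t := by linarith [ht.2]
    rw [ENNReal.ofReal_mul (mul_nonneg (pow_nonneg ha _) hb),
      ENNReal.ofReal_mul (pow_nonneg ha _),
      ENNReal.ofReal_pow ha, ENNReal.ofReal_pow (by linarith [hs.2] : (0:ℝ) ≤ 1 - s)]
  rw [setLIntegral_congr_fun measurableSet_Ioo h3]
  have h4 : IntegrableOn (fun t : ℝ => t^(k-1) * (s-t) * (1-s)^(n-k)) (Set.Ioo 0 s) := by
    apply IntegrableOn.mono_set (t := Set.Icc 0 s)
    · exact (Continuous.integrableOn_Icc (by continuity))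
    · exact Set.Ioo_subset_Icc_self
  have h5 : 0 ≤ᵐ[volume.restrict (Set.Ioo (0:ℝ) s)]
      (fun t : ℝ => t^(k-1) * (s-t) * (1-s)^(n-k)) := by
    refine (ae_restrict_iff' measurableSet_Ioo).mpr (Filter.Eventually.of_forall fun t ht => ?_)
    have h6 : (0:ℝ) ≤ 1 - s := by linarith [hs.2]
    exact mul_nonneg (mul_nonneg (pow_nonneg ht.1.le _) (by linarith [ht.2])) (pow_nonneg h6 _)
  rw [← ofReal_integral_eq_lintegral_ofReal h4 h5]
  congr 1
  rw [← MeasureTheory.integral_Ioc_eq_integral_Ioo,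
    ← intervalIntegral.integral_of_le hs.1.le]
  have h7 : ∫ t in (0:ℝ)..s, t^(k-1) * (s-t) * (1-s)^(n-k) =
      (∫ t in (0:ℝ)..s, t^(k-1) * (s-t)) * (1-s)^(n-k) :=
    intervalIntegral.integral_mul_const _ _
  rw [h7, inner_int]
  have e1 : k - 1 + 2 = k + 1 := by omega
  have e2 : ((k-1 : ℕ) : ℝ) = (k:ℝ) - 1 := by
    push_cast [Nat.cast_sub hk]; ring
  rw [e1, e2]
  ring_nf

lemma s_lintegral (hk : 1 ≤ k) (hkn : k ≤ n) :
    ∫⁻ s in Set.Ioc (0:ℝ) 1, ENNReal.ofReal ((1-s)^(n-k) * (s^(k+1)/((k:ℝ)*((k:ℝ)+1))))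
    = ENNReal.ofReal ((((k+1).factorial * (n-k).factorial : ℕ) : ℝ) / ((n+2).factorial : ℕ)
        / ((k:ℝ)*((k:ℝ)+1))) := by
  have h4 : IntegrableOn (fun s : ℝ => (1-s)^(n-k) * (s^(k+1)/((k:ℝ)*((k:ℝ)+1))))
      (Set.Ioc 0 1) := by
    apply IntegrableOn.mono_set (t := Set.Icc 0 1)
    · exact (Continuous.integrableOn_Icc (by continuity))
    · exact Set.Ioc_subset_Icc_self
  have h5 : 0 ≤ᵐ[volume.restrict (Set.Ioc (0:ℝ) 1)]
      (fun s : ℝ => (1-s)^(n-k) * (s^(k+1)/((k:ℝ)*((k:ℝ)+1)))) := by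
    refine (ae_restrict_iff' measurableSet_Ioc).mpr (Filter.Eventually.of_forall fun s ht => ?_)
    have h1 : (0:ℝ) ≤ 1 - s := by linarith [ht.2]
    have h2 := ht.1.le
    have h3 : (0:ℝ) < k := by exact_mod_cast hk
    have h4 : (0:ℝ) < (k:ℝ) + 1 := by linarith
    exact mul_nonneg (pow_nonneg h1 _) (div_nonneg (pow_nonneg h2 _) (by positivity))
  rw [← ofReal_integral_eq_lintegral_ofReal h4 h5]
  congr 1
  rw [← intervalIntegral.integral_of_le (by norm_num : (0:ℝ) ≤ 1)]
  have h7 : ∀ s ∈ Set.uIcc (0:ℝ) 1, (1-s)^(n-k) * (s^(k+1)/((k:ℝ)*((k:ℝ)+1))) =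
      (s^(k+1) * (1-s)^(n-k)) * (1/((k:ℝ)*((k:ℝ)+1))) := by
    intro s _; ring
  rw [intervalIntegral.integral_congr h7, intervalIntegral.integral_mul_const, beta_nat]
  have e1 : k + 1 + (n-k) + 1 = n + 2 := by omega
  rw [e1]
  push_cast
  ring

lemma final_arith (hk : 1 ≤ k) (hkn : k ≤ n) :
    ((n:ℝ)+1)*((n:ℝ)+2) * ((n.choose (k-1) * (n - (k-1)) : ℕ) : ℝ) *
      ((((k+1).factorial * (n-k).factorial : ℕ) : ℝ) / ((n+2).factorial : ℕ)
        / ((k:ℝ)*((k:ℝ)+1))) = 1 := by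
  have e1 : n - (k-1) = (n-k) + 1 := by omega
  have hch : ((n.choose (k-1) : ℕ) : ℝ) * (((k-1).factorial : ℕ) : ℝ) *
      ((((n-k) + 1).factorial : ℕ) : ℝ) = ((n.factorial : ℕ) : ℝ) := by
    rw [← e1]
    exact_mod_cast congrArg (Nat.cast (R := ℝ))
      (Nat.choose_mul_factorial_mul_factorial (by omega : k - 1 ≤ n))
  rw [Nat.factorial_succ (n-k)] at hch
  push_cast at hch
  have e3 : (k+1).factorial = (k+1) * (k * (k-1).factorial) := by
    rw [Nat.factorial_succ]
    congr 1
    conv_lhs => rw [show k = (k-1) + 1 from by omega, Nat.factorial_succ]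
    congr 1
    omega
  have e2 : (n+2).factorial = (n+2) * ((n+1) * n.factorial) := by
    rw [Nat.factorial_succ, Nat.factorial_succ]
  have hK : (1:ℝ) ≤ (k:ℝ) := by exact_mod_cast hk
  have hN : (k:ℝ) ≤ (n:ℝ) := by exact_mod_cast hkn
  have hu : (0:ℝ) ≤ (((n-k) : ℕ) : ℝ) := by positivity
  have ha : ((n.choose (k-1) : ℕ) : ℝ) ≠ 0 :=
    Nat.cast_ne_zero.mpr (Nat.choose_pos (by omega : k - 1 ≤ n)).ne'
  have hF1 : (((k-1).factorial : ℕ) : ℝ) ≠ 0 := Nat.cast_ne_zero.mpr (Nat.factorial_ne_zero _)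
  have hF2 : (((n-k).factorial : ℕ) : ℝ) ≠ 0 := Nat.cast_ne_zero.mpr (Nat.factorial_ne_zero _)
  rw [e1, e3, e2]
  push_cast
  set N := (n:ℝ); set K := (k:ℝ)
  set a := ((n.choose (k-1) : ℕ) : ℝ)
  set F1 := (((k-1).factorial : ℕ) : ℝ)
  set F2 := (((n-k).factorial : ℕ) : ℝ)
  set Fn := ((n.factorial : ℕ) : ℝ)
  set u := (((n-k) : ℕ) : ℝ)
  rw [← hch]
  have h1 : K ≠ 0 := by linarith
  have h2 : K + 1 ≠ 0 := by linarith
  have h3 : N + 1 ≠ 0 := by linarith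
  have h4 : N + 2 ≠ 0 := by linarith
  have h5 : u + 1 ≠ 0 := by linarith
  field_simp


end Calc2

theorem stmt8 (n k : ℕ) (hn : 1 ≤ n) (hk : 1 ≤ k) (hkn : k ≤ n) :
    (∀ x ∈ Set.Icc (0 : Fin n → ℝ) 1,
      0 ≤ ((n : ℝ) + 1) * ((n : ℝ) + 2) * (oStat x (k + 1) - oStat x k) *
        (oStat x k - oStat x (k - 1))) ∧
    (∫ x in Set.Icc (0 : Fin n → ℝ) 1,
      ((n : ℝ) + 1) * ((n : ℝ) + 2) * (oStat x (k + 1) - oStat x k) *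
        (oStat x k - oStat x (k - 1))) = 1 := by
  have hc : (0:ℝ) ≤ ((n:ℝ)+1)*((n:ℝ)+2) := by positivity
  have part1 : ∀ x ∈ Set.Icc (0 : Fin n → ℝ) 1,
      0 ≤ ((n : ℝ) + 1) * ((n : ℝ) + 2) * (oStat x (k + 1) - oStat x k) *
        (oStat x k - oStat x (k - 1)) := by
    intro x hx
    have d1 : 0 ≤ oStat x (k+1) - oStat x k := sub_nonneg.mpr (oStat_mono hx k)
    have d2 : 0 ≤ oStat x k - oStat x (k-1) := by
      have h := oStat_mono hx (k-1)
      rw [show k-1+1 = k from by omega] at h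
      exact sub_nonneg.mpr h
    exact mul_nonneg (mul_nonneg hc d1) d2
  refine ⟨part1, ?_⟩
  have hmeas : Measurable (fun x : Fin n → ℝ =>
      ((n : ℝ) + 1) * ((n : ℝ) + 2) * (oStat x (k + 1) - oStat x k) *
        (oStat x k - oStat x (k - 1))) :=
    (measurable_const.mul ((measurable_oStat n (k+1)).sub (measurable_oStat n k))).mul
      ((measurable_oStat n k).sub (measurable_oStat n (k-1)))
  rw [MeasureTheory.integral_eq_lintegral_of_nonneg_ae
    ((ae_restrict_iff' measurableSet_Icc).mpr (Filter.Eventually.of_forall part1))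
    hmeas.aestronglyMeasurable]
  suffices hL : ∫⁻ x in Set.Icc (0:Fin n → ℝ) 1, ENNReal.ofReal
      (((n : ℝ) + 1) * ((n : ℝ) + 2) * (oStat x (k + 1) - oStat x k) *
        (oStat x k - oStat x (k - 1))) = 1 by
    rw [hL, ENNReal.toReal_one]
  have hstep1 : ∀ᵐ x ∂volume, x ∈ Set.Icc (0:Fin n → ℝ) 1 → ENNReal.ofReal
      (((n : ℝ) + 1) * ((n : ℝ) + 2) * (oStat x (k + 1) - oStat x k) *
        (oStat x k - oStat x (k - 1)))
      = ENNReal.ofReal (((n:ℝ)+1)*((n:ℝ)+2)) *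
        ((∫⁻ s in Set.Ioc (0:ℝ) 1, eF n k (x,s)) *
          (∫⁻ t in Set.Ioc (0:ℝ) 1, eF n (k-1) (x,t))) := by
    refine Filter.Eventually.of_forall fun x hx => ?_
    have d1 : 0 ≤ oStat x (k+1) - oStat x k := sub_nonneg.mpr (oStat_mono hx k)
    rw [ENNReal.ofReal_mul (mul_nonneg hc d1), ENNReal.ofReal_mul hc,
      lint_eF hx hkn]
    have h2 := lint_eF hx (show k - 1 ≤ n by omega) (x := x)
    rw [show k-1+1 = k from by omega] at h2
    rw [h2, mul_assoc]
  rw [setLIntegral_congr_fun_ae measurableSet_Icc hstep1,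
    lintegral_const_mul' _ _ ENNReal.ofReal_ne_top, swap_lemma k (k-1)]
  have hW : ∀ᵐ s ∂volume, s ∈ Set.Ioc (0:ℝ) 1 →
      (∫⁻ t in Set.Ioc (0:ℝ) 1, ∫⁻ x in Set.Icc (0:Fin n → ℝ) 1,
        eF n k (x,s) * eF n (k-1) (x,t))
      = ((n.choose (k-1) * (n - (k-1)) : ℕ) : ENNReal) *
          ENNReal.ofReal ((1-s)^(n-k) * (s^(k+1)/((k:ℝ)*((k:ℝ)+1)))) := by
    refine Filter.Eventually.of_forall fun s hs => ?_
    rw [setLIntegral_congr_fun measurableSet_Ioc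
      (fun t ht => W_eq hk hkn hs ht)]
    have hpull : ∀ t : ℝ, (if t < s then ((n.choose (k-1) * (n - (k-1)) : ℕ) : ENNReal) *
        (ENNReal.ofReal t ^ (k-1) * ENNReal.ofReal (s-t) * ENNReal.ofReal (1-s) ^ (n-k))
        else 0)
        = ((n.choose (k-1) * (n - (k-1)) : ℕ) : ENNReal) *
          (if t < s then ENNReal.ofReal t ^ (k-1) * ENNReal.ofReal (s-t) *
            ENNReal.ofReal (1-s) ^ (n-k) else 0) := by
      intro t; split_ifs <;> simp
    rw [lintegral_congr hpull, lintegral_const_mul' _ _ (ENNReal.natCast_ne_top _),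
      t_lintegral hk hkn hs]
  rw [setLIntegral_congr_fun_ae measurableSet_Ioc hW,
    lintegral_const_mul' _ _ (ENNReal.natCast_ne_top _), s_lintegral hk hkn]
  rw [show ((n.choose (k-1) * (n - (k-1)) : ℕ) : ENNReal)
      = ENNReal.ofReal ((n.choose (k-1) * (n - (k-1)) : ℕ) : ℝ) from
      (ENNReal.ofReal_natCast _).symm,
    ← ENNReal.ofReal_mul (by positivity), ← ENNReal.ofReal_mul hc, ← mul_assoc,
    final_arith hk hkn, ENNReal.ofReal_one]
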